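/- Let (a_n)_{n≥0} be a sequence of complex numbers with ∑_{n=0}^{∞} |a_n| < ∞, and let (θ_n)_{n≥0} be any sequence of real numbers. Then for Lebesgue-almost every x ∈ ℝ, the series B^{-1}(x) = ∑_{n=0}^{∞} |a_n|² / sin²((x − θ_n)/2) converges (is finite). -/

import Mathlib

open scoped ENNReal
open MeasureTheory Real Set


private lemma sin_sq_lower (t : ℝ) :
    (t - 2*π*(round (t/(2*π))))^2 ≤ π^2 * Real.sin (t/2)^2 := by
  have hπ : (0:ℝ) < π := Real.pi_pos
  set k : ℤ := round (t/(2*π)) with hk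
  set r : ℝ := t - 2*π*k with hrdef
  have hr : |r| ≤ π := by
    have h := abs_sub_round (t/(2*π))
    have : r = (2*π) * (t/(2*π) - k) := by field_simp [hrdef]; exact hrdef
    rw [this, abs_mul, abs_of_pos (by positivity : (0:ℝ) < 2*π)]
    nlinarith [h]
  have hone : ((-1:ℝ)^k)^2 = 1 := by
    rcases Int.even_or_odd k with h | h
    · rw [h.neg_one_zpow]; norm_num
    · rw [Odd.neg_one_zpow h]; norm_num
  have hsin : Real.sin (t/2)^2 = Real.sin (r/2)^2 := by
    have ht2 : t/2 = r/2 + (k:ℝ)*π := by rw [hrdef]; ring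
    rw [ht2, Real.sin_add_int_mul_pi, mul_pow, hone, one_mul]
  have habs : Real.sin (r/2)^2 = Real.sin (|r|/2)^2 := by
    rcases abs_cases r with ⟨h, _⟩ | ⟨h, _⟩
    · rw [h]
    · rw [h]; rw [show -r/2 = -(r/2) by ring, Real.sin_neg, neg_sq]
  have hlow : |r|/π ≤ Real.sin (|r|/2) := by
    have h := Real.mul_le_sin (x := |r|/2) (by positivity) (by linarith)
    calc |r|/π = 2/π * (|r|/2) := by field_simp
    _ ≤ Real.sin (|r|/2) := h
  have hsq : (|r|/π)^2 ≤ Real.sin (|r|/2)^2 := by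
    have h0 : 0 ≤ |r|/π := by positivity
    exact pow_le_pow_left₀ h0 hlow 2
  rw [hsin, habs]
  have : (|r|/π)^2 = r^2/π^2 := by rw [div_pow, sq_abs]
  rw [this] at hsq
  calc r^2 = π^2 * (r^2/π^2) := by field_simp
  _ ≤ π^2 * Real.sin (|r|/2)^2 := by nlinarith [hsq, sq_nonneg π]


noncomputable def gE (A z : ℝ) (x : ℝ) : ℝ≥0∞ :=
  min 1 (ENNReal.ofReal (A^2) / ENNReal.ofReal ((x - z)^2))

private lemma measurable_gE (A z : ℝ) : Measurable (gE A z) := by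
  apply Measurable.min measurable_const
  exact Measurable.div measurable_const
    (ENNReal.measurable_ofReal.comp (by fun_prop))

private lemma gE_le_tsum (A z : ℝ) (hA : 0 ≤ A) (x : ℝ) :
    gE A z x ≤ ∑' j : ℕ, ENNReal.ofReal ((1/4)^j) *
      (Metric.closedBall z (2^(j+1)*A)).indicator (fun _ => (1:ℝ≥0∞)) x := by
  by_cases h : |x - z| ≤ 2*A
  · refine le_trans ?_ (ENNReal.le_tsum 0)
    have hx : x ∈ Metric.closedBall z (2^(0+1)*A) := by
      simp only [Metric.mem_closedBall, Real.dist_eq]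
      norm_num
      exact h
    rw [Set.indicator_of_mem hx]
    simp only [pow_zero, ENNReal.ofReal_one, mul_one]
    exact min_le_left _ _
  · push_neg at h
    have h0 : (0:ℝ) < |x - z| := lt_of_le_of_lt (by positivity) h
    have hne : x - z ≠ 0 := by intro hh; rw [hh] at h0; simp at h0
    have hxz : (0:ℝ) < (x - z)^2 := pow_two_pos_of_ne_zero hne
    by_cases hA0 : A = 0
    · subst hA0
      simp only [gE]
      rw [show ENNReal.ofReal ((0:ℝ)^2) = 0 by norm_num, ENNReal.zero_div]
      simp
    · have hApos : 0 < A := lt_of_le_of_ne hA (Ne.symm hA0)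
      have hex : ∃ j : ℕ, |x - z| ≤ 2^(j+1)*A := by
        obtain ⟨j, hj⟩ := pow_unbounded_of_one_lt (|x - z|/A) (by norm_num : (1:ℝ) < 2)
        refine ⟨j, ?_⟩
        have := (div_le_iff₀ hApos).mp hj.le
        calc |x - z| ≤ 2^j * A := this
        _ ≤ 2^(j+1)*A := by
          have : (2:ℝ)^j ≤ 2^(j+1) := by
            apply pow_le_pow_right₀ (by norm_num) (by omega)
          nlinarith
      classical
      let j₀ := Nat.find hex
      have hj₀ : |x - z| ≤ 2^(j₀+1)*A := Nat.find_spec hex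
      have hj₀ne : j₀ ≠ 0 := by
        intro hzero
        have hsp := Nat.find_spec hex
        rw [show Nat.find hex = j₀ from rfl, hzero] at hsp
        norm_num at hsp
        linarith
      obtain ⟨m, hm⟩ := Nat.exists_eq_succ_of_ne_zero hj₀ne
      have hprev : ¬ |x - z| ≤ 2^(m+1)*A := Nat.find_min hex (by omega)
      push_neg at hprev
      have hpm : (2:ℝ)^j₀ * A < |x - z| := by rw [hm]; exact hprev
      have hlt : (4:ℝ)^j₀ * A^2 < (x - z)^2 := by
        have h2 : ((2:ℝ)^j₀*A)^2 < |x - z|^2 :=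
          pow_lt_pow_left₀ hpm (by positivity) (by norm_num)
        rw [sq_abs] at h2
        calc (4:ℝ)^j₀ * A^2 = ((2:ℝ)^j₀*A)^2 := by
              rw [mul_pow, ← pow_mul, mul_comm j₀ 2, pow_mul]; norm_num
        _ < (x - z)^2 := h2
      have hdiv : A^2/(x - z)^2 ≤ (1/4)^j₀ := by
        rw [div_le_iff₀ hxz, div_pow, one_pow, div_mul_eq_mul_div,
          le_div_iff₀ (by positivity : (0:ℝ) < 4^j₀)]
        nlinarith [hlt]
      refine le_trans ?_ (ENNReal.le_tsum j₀)
      have hind : x ∈ Metric.closedBall z (2^(j₀+1)*A) := by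
        simpa [Metric.mem_closedBall, Real.dist_eq] using hj₀
      rw [Set.indicator_of_mem hind, mul_one]
      calc gE A z x ≤ ENNReal.ofReal (A^2) / ENNReal.ofReal ((x - z)^2) := min_le_right _ _
      _ = ENNReal.ofReal (A^2/(x - z)^2) := (ENNReal.ofReal_div_of_pos hxz).symm
      _ ≤ ENNReal.ofReal ((1/4)^j₀) := ENNReal.ofReal_le_ofReal hdiv

private lemma lintegral_gE (A z : ℝ) (hA : 0 ≤ A) :
    ∫⁻ x, gE A z x ≤ ENNReal.ofReal (8*A) := by
  have hmeas : ∀ j : ℕ, AEMeasurable (fun x => ENNReal.ofReal ((1/4:ℝ)^j) *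
      (Metric.closedBall z (2^(j+1)*A)).indicator (fun _ => (1:ℝ≥0∞)) x) volume := by
    intro j
    exact ((measurable_const.indicator measurableSet_closedBall).const_mul _).aemeasurable
  calc ∫⁻ x, gE A z x
      ≤ ∫⁻ x, ∑' j : ℕ, ENNReal.ofReal ((1/4)^j) *
        (Metric.closedBall z (2^(j+1)*A)).indicator (fun _ => (1:ℝ≥0∞)) x :=
        lintegral_mono (gE_le_tsum A z hA)
    _ = ∑' j : ℕ, ∫⁻ x, ENNReal.ofReal ((1/4)^j) *
        (Metric.closedBall z (2^(j+1)*A)).indicator (fun _ => (1:ℝ≥0∞)) x :=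
        lintegral_tsum hmeas
    _ = ∑' j : ℕ, ENNReal.ofReal ((1/4)^j) * ENNReal.ofReal (2*(2^(j+1)*A)) := by
        congr 1
        ext j
        rw [lintegral_const_mul _ (measurable_const.indicator measurableSet_closedBall)]
        congr 1
        rw [show ((fun _ => (1:ℝ≥0∞)) : ℝ → ℝ≥0∞) = (1 : ℝ → ℝ≥0∞) from rfl]
        rw [lintegral_indicator_one measurableSet_closedBall]
        exact Real.volume_closedBall z _
    _ = ∑' j : ℕ, ENNReal.ofReal (4*A*(1/2)^j) := by
        congr 1
        ext j
        rw [← ENNReal.ofReal_mul (by positivity)]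
        congr 1
        rw [show (2:ℝ)*(2^(j+1)*A) = 2^j*2^2*A by ring]
        have h4 : (4:ℝ)^j = 2^j * 2^j := by rw [← mul_pow]; norm_num
        rw [div_pow, one_pow, div_pow, one_pow, h4]
        have h2 : ((2:ℝ)^j) ≠ 0 := by positivity
        field_simp
        ring
    _ = ENNReal.ofReal (∑' j : ℕ, 4*A*(1/2)^j) := by
        rw [ENNReal.ofReal_tsum_of_nonneg (fun j => by positivity)
          ((summable_geometric_two).mul_left _)]
    _ = ENNReal.ofReal (8*A) := by
        rw [tsum_mul_left, tsum_geometric_two]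
        ring_nf

private lemma key_interval (c ϑ L : ℝ) (hc : 0 ≤ c) :
    ∫⁻ x in Ioc L (L + 2*π),
      min 1 (ENNReal.ofReal (c^2) / ENNReal.ofReal (Real.sin ((x - ϑ)/2)^2))
      ≤ ENNReal.ofReal (24*(π*c)) := by
  have hπ : (0:ℝ) < π := Real.pi_pos
  set K : ℤ := round ((L - ϑ)/(2*π)) with hK
  have step : ∀ x ∈ Ioc L (L + 2*π),
      min 1 (ENNReal.ofReal (c^2) / ENNReal.ofReal (Real.sin ((x - ϑ)/2)^2))
      ≤ ∑ i ∈ Finset.range 3, gE (π*c) (ϑ + 2*π*((K:ℝ)+i)) x := by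
    intro x hx
    set k : ℤ := round ((x - ϑ)/(2*π)) with hk
    have hbound : K ≤ k ∧ k ≤ K + 2 := by
      have h1 := abs_sub_round ((x - ϑ)/(2*π))
      have h2 := abs_sub_round ((L - ϑ)/(2*π))
      rw [abs_le] at h1 h2
      have hxl : L < x := hx.1
      have hxu : x ≤ L + 2*π := hx.2
      constructor
      · have : (K:ℝ) < (k:ℝ) + 1 := by
          have d1 : (x - ϑ)/(2*π) - 1/2 ≤ (k:ℝ) := by linarith [h1.2]
          have d2 : (K:ℝ) ≤ (L - ϑ)/(2*π) + 1/2 := by linarith [h2.1]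
          have h2π : (0:ℝ) < 2*π := by positivity
          have heq : (x - ϑ)/(2*π) - (L - ϑ)/(2*π) = (x - L)/(2*π) := by ring
          have hpos : (0:ℝ) < (x - L)/(2*π) := div_pos (by linarith) h2π
          linarith
        exact_mod_cast Int.lt_add_one_iff.mp (by exact_mod_cast this)
      · have : (k:ℝ) < (K:ℝ) + 3 := by
          have d1 : (k:ℝ) ≤ (x - ϑ)/(2*π) + 1/2 := by linarith [h1.1]
          have d2 : (L - ϑ)/(2*π) - 1/2 ≤ (K:ℝ) := by linarith [h2.2]
          have h2π : (0:ℝ) < 2*π := by positivity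
          have heq : (x - ϑ)/(2*π) - (L - ϑ)/(2*π) = (x - L)/(2*π) := by ring
          have hle : (x - L)/(2*π) ≤ 1 := (div_le_one h2π).mpr (by linarith)
          linarith
        have : k < K + 3 := by exact_mod_cast this
        omega
    have hpt : min 1 (ENNReal.ofReal (c^2) / ENNReal.ofReal (Real.sin ((x - ϑ)/2)^2))
        ≤ gE (π*c) (ϑ + 2*π*(k:ℝ)) x := by
      unfold gE
      apply min_le_min le_rfl
      have hsin := sin_sq_lower (x - ϑ)
      have hπ2 : ENNReal.ofReal (π^2) ≠ 0 := by
        simp [ENNReal.ofReal_eq_zero]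
      calc ENNReal.ofReal (c^2) / ENNReal.ofReal (Real.sin ((x - ϑ)/2)^2)
          = ENNReal.ofReal (π^2) * ENNReal.ofReal (c^2) /
            (ENNReal.ofReal (π^2) * ENNReal.ofReal (Real.sin ((x - ϑ)/2)^2)) :=
            (ENNReal.mul_div_mul_left _ _ hπ2 ENNReal.ofReal_ne_top).symm
        _ = ENNReal.ofReal ((π*c)^2) /
            ENNReal.ofReal (π^2 * Real.sin ((x - ϑ)/2)^2) := by
            rw [← ENNReal.ofReal_mul (by positivity), ← ENNReal.ofReal_mul (by positivity)]
            congr 2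
            ring
        _ ≤ ENNReal.ofReal ((π*c)^2) /
            ENNReal.ofReal ((x - (ϑ + 2*π*(k:ℝ)))^2) := by
            apply ENNReal.div_le_div le_rfl
            apply ENNReal.ofReal_le_ofReal
            calc (x - (ϑ + 2*π*(k:ℝ)))^2 = ((x - ϑ) - 2*π*(k:ℝ))^2 := by ring
            _ ≤ π^2 * Real.sin ((x - ϑ)/2)^2 := by rw [hk]; exact hsin
    have hcast : (((k - K).toNat : ℕ) : ℝ) = (k:ℝ) - (K:ℝ) := by
      rw [← Int.cast_natCast, Int.toNat_of_nonneg (by omega)]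
      push_cast
      ring
    have hmem : (k - K).toNat ∈ Finset.range 3 := by
      simp only [Finset.mem_range]
      omega
    calc min 1 (ENNReal.ofReal (c^2) / ENNReal.ofReal (Real.sin ((x - ϑ)/2)^2))
        ≤ gE (π*c) (ϑ + 2*π*(k:ℝ)) x := hpt
      _ = gE (π*c) (ϑ + 2*π*((K:ℝ) + (((k - K).toNat : ℕ) : ℝ))) x := by
          rw [hcast]
          ring_nf
      _ ≤ ∑ i ∈ Finset.range 3, gE (π*c) (ϑ + 2*π*((K:ℝ)+i)) x :=
          Finset.single_le_sum (f := fun i : ℕ => gE (π*c) (ϑ + 2*π*((K:ℝ)+i)) x)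
            (fun i _ => zero_le) hmem
  calc ∫⁻ x in Ioc L (L + 2*π),
      min 1 (ENNReal.ofReal (c^2) / ENNReal.ofReal (Real.sin ((x - ϑ)/2)^2))
      ≤ ∫⁻ x in Ioc L (L + 2*π), ∑ i ∈ Finset.range 3, gE (π*c) (ϑ + 2*π*((K:ℝ)+i)) x :=
        setLIntegral_mono' measurableSet_Ioc step
    _ ≤ ∫⁻ x, ∑ i ∈ Finset.range 3, gE (π*c) (ϑ + 2*π*((K:ℝ)+i)) x :=
        setLIntegral_le_lintegral _ _
    _ = ∑ i ∈ Finset.range 3, ∫⁻ x, gE (π*c) (ϑ + 2*π*((K:ℝ)+i)) x :=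
        lintegral_finset_sum _ (fun i _ => measurable_gE _ _)
    _ ≤ ∑ i ∈ Finset.range 3, ENNReal.ofReal (8*(π*c)) :=
        Finset.sum_le_sum (fun i _ => lintegral_gE _ _ (by positivity))
    _ = ENNReal.ofReal (24*(π*c)) := by
        rw [Finset.sum_const, Finset.card_range]
        rw [show (24:ℝ)*(π*c) = 8*(π*c) + (8*(π*c) + 8*(π*c)) by ring]
        rw [ENNReal.ofReal_add (by positivity) (by positivity),
          ENNReal.ofReal_add (by positivity) (by positivity)]
        ring

/-- If `∑ |a_n| < ∞` then for Lebesgue-almost every `x` the series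
`B⁻¹(x) = ∑_n |a_n|² / sin²((x − θ_n)/2)` is finite.  The sum is taken in `[0,∞]`,
with the convention that a term with vanishing denominator and `a_n ≠ 0` is `+∞`
(in `ℝ≥0∞` one has `c / 0 = ∞` for `c ≠ 0` and `0 / 0 = 0`). -/
theorem Binv_finite_ae_of_l1
    (a : ℕ → ℂ) (θ : ℕ → ℝ) (ha : Summable fun n => ‖a n‖) :
    ∀ᵐ x : ℝ ∂MeasureTheory.volume,
      (∑' n : ℕ, ENNReal.ofReal (‖a n‖ ^ 2) /
        ENNReal.ofReal (Real.sin ((x - θ n) / 2) ^ 2)) < ⊤ := by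
  have hπ : (0:ℝ) < π := Real.pi_pos
  set c : ℕ → ℝ := fun n => ‖a n‖ with hc
  set T : ℕ → ℝ → ℝ≥0∞ := fun n x =>
    ENNReal.ofReal (c n ^ 2) / ENNReal.ofReal (Real.sin ((x - θ n) / 2) ^ 2) with hT
  have hmin_m : ∀ n, Measurable (fun x => min 1 (T n x)) := by
    intro n
    apply Measurable.min measurable_const
    exact Measurable.div measurable_const (ENNReal.measurable_ofReal.comp (by fun_prop))
  set F : ℝ → ℝ≥0∞ := fun x => ∑' n, min 1 (T n x) with hF
  have hFm : Measurable F := Measurable.ennreal_tsum hmin_m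
  -- integral bound on each interval
  have hInt : ∀ L : ℝ, ∫⁻ x in Ioc L (L + 2*π), F x ≠ ⊤ := by
    intro L
    rw [hF]
    rw [lintegral_tsum (fun n => (hmin_m n).aemeasurable)]
    have hb : ∀ n, ∫⁻ x in Ioc L (L + 2*π), min 1 (T n x) ≤ ENNReal.ofReal (24*(π*c n)) :=
      fun n => key_interval (c n) (θ n) L (norm_nonneg _)
    have hsum : Summable (fun n => 24*(π*c n)) := by
      have := ha.mul_left (24*π)
      simpa [mul_assoc] using this
    refine ne_top_of_le_ne_top ?_ (ENNReal.tsum_le_tsum hb)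
    rw [← ENNReal.ofReal_tsum_of_nonneg (fun n => by positivity) hsum]
    exact ENNReal.ofReal_ne_top
  -- a.e. finiteness of F
  have hFae : ∀ᵐ x : ℝ ∂volume, F x < ⊤ := by
    have hNmeas : MeasurableSet {x : ℝ | ¬ F x < ⊤} := by
      have : {x : ℝ | ¬ F x < ⊤} = F ⁻¹' {⊤} := by
        ext x; simp [lt_top_iff_ne_top]
      rw [this]
      exact hFm (measurableSet_singleton ⊤)
    rw [MeasureTheory.ae_iff]
    have hcov : ∀ x : ℝ, ∃ m : ℤ, x ∈ Ioc (2*π*m) (2*π*m + 2*π) := by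
      intro x
      have h2π : (0:ℝ) < 2*π := by positivity
      have hx : x = 2*π*(x/(2*π)) := by field_simp
      refine ⟨⌈x/(2*π)⌉ - 1, ?_, ?_⟩
      · have h1 : (⌈x/(2*π)⌉ : ℝ) < x/(2*π) + 1 := Int.ceil_lt_add_one _
        push_cast
        nlinarith [mul_lt_mul_of_pos_left (show ((⌈x/(2*π)⌉:ℝ) - 1) < x/(2*π) by linarith) h2π]
      · have h1 : x/(2*π) ≤ (⌈x/(2*π)⌉ : ℝ) := Int.le_ceil _
        push_cast
        nlinarith [mul_le_mul_of_nonneg_left h1 h2π.le]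
    have hcover : {x : ℝ | ¬ F x < ⊤} ⊆
        ⋃ m : ℤ, ({x : ℝ | ¬ F x < ⊤} ∩ Ioc (2*π*(m:ℝ)) (2*π*m + 2*π)) := by
      intro x hx
      obtain ⟨m, hm⟩ := hcov x
      exact mem_iUnion.mpr ⟨m, hx, hm⟩
    refine measure_mono_null hcover (measure_iUnion_null fun m => ?_)
    have hrest : ∀ᵐ x ∂(volume.restrict (Ioc (2*π*(m:ℝ)) (2*π*m + 2*π))), F x < ⊤ :=
      ae_lt_top hFm (hInt (2*π*m))
    rw [MeasureTheory.ae_iff] at hrest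
    rw [Measure.restrict_apply hNmeas] at hrest
    exact hrest
  -- a.e. all sines nonzero
  have hsin : ∀ᵐ x : ℝ ∂volume, ∀ n, Real.sin ((x - θ n)/2) ≠ 0 := by
    rw [ae_all_iff]
    intro n
    rw [MeasureTheory.ae_iff]
    refine measure_mono_null (t := Set.range (fun k : ℤ => θ n + 2*((k:ℝ)*π)))
      (fun x hx => ?_) (Set.Countable.measure_zero (Set.countable_range _) _)
    simp only [mem_setOf_eq, not_not] at hx
    rw [Real.sin_eq_zero_iff] at hx
    obtain ⟨k, hk⟩ := hx
    refine ⟨k, ?_⟩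
    show θ n + 2*((k:ℝ)*π) = x
    linarith
  filter_upwards [hFae, hsin] with x hFx hsx
  -- final pointwise argument
  have hTfin : ∀ n, T n x < ⊤ := by
    intro n
    exact ENNReal.div_lt_top ENNReal.ofReal_ne_top
      (ENNReal.ofReal_pos.mpr (pow_two_pos_of_ne_zero (hsx n))).ne'
  classical
  set S : Set ℕ := {n | (1:ℝ≥0∞) ≤ T n x} with hS
  have hSfin : S.Finite := by
    by_contra hinf
    have hinf' : S.Infinite := hinf
    have h1 : ∑' (_ : S), (1:ℝ≥0∞) = ⊤ :=
      have := hinf'.to_subtype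
      ENNReal.tsum_const_eq_top_of_ne_zero one_ne_zero
    have h2 : ∑' (n : S), (1:ℝ≥0∞) ≤ ∑' (n : S), min 1 (T (n:ℕ) x) :=
      ENNReal.tsum_le_tsum (fun n => le_min le_rfl n.2)
    have h3 : ∑' (n : S), min 1 (T (n:ℕ) x) ≤ F x := by
      rw [tsum_subtype S (fun n => min 1 (T n x))]
      exact ENNReal.tsum_le_tsum (fun n => Set.indicator_le_self _ _ n)
    have : (⊤:ℝ≥0∞) ≤ F x := h1 ▸ (h2.trans h3)
    exact absurd (lt_of_le_of_lt this hFx) (lt_irrefl _)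
  have hpt : ∀ n, T n x ≤ min 1 (T n x) + Set.indicator S (fun n => T n x) n := by
    intro n
    by_cases hn : n ∈ S
    · rw [Set.indicator_of_mem hn]
      exact le_add_self
    · rw [Set.indicator_of_notMem hn, add_zero]
      exact le_of_eq (min_eq_right (le_of_lt (not_le.mp hn))).symm
  have hfinsum : ∑' n, Set.indicator S (fun n => T n x) n < ⊤ := by
    rw [tsum_eq_sum (s := hSfin.toFinset)
      (fun n hn => Set.indicator_of_notMem (by simpa using hn) _)]
    refine ENNReal.sum_lt_top.mpr (fun n _ => ?_)
    exact lt_of_le_of_lt (Set.indicator_le_self S (fun n => T n x) n) (hTfin n)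
  calc ∑' n, T n x ≤ ∑' n, (min 1 (T n x) + Set.indicator S (fun n => T n x) n) :=
        ENNReal.tsum_le_tsum hpt
    _ = F x + ∑' n, Set.indicator S (fun n => T n x) n := ENNReal.tsum_add
    _ < ⊤ := ENNReal.add_lt_top.mpr ⟨hFx, hfinsum⟩
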